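/- Let A be a type with two binary operations | and ∗. If axiom C3 ((a|b)|(c|d) = (a|c)|(b|d) for all a,b,c,d), axiom C6 ((x|y) ∗ y = x for all x, y), and axiom C7 ((x∗y) | y = x for all x, y) hold, then axiom C4 holds: (a|b)∗(c|d) = (a∗c)|(b∗d) for all a,b,c,d. (Lemma 2.1.3(h).) -/
import Mathlib

/-- Lemma 2.1.3(h): axioms C3, C6 and C7 imply axiom C4. -/
theorem conway_C3_C6_C7_imp_C4 {A : Type*} (bar ast : A → A → A)
    (hC3 : ∀ a b c d : A, bar (bar a b) (bar c d) = bar (bar a c) (bar b d))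
    (hC6 : ∀ x y : A, ast (bar x y) y = x)
    (hC7 : ∀ x y : A, bar (ast x y) y = x) :
    ∀ a b c d : A, ast (bar a b) (bar c d) = bar (ast a c) (ast b d) := by
  intro a b c d
  have h : bar (bar (ast a c) (ast b d)) (bar c d) = bar a b := by
    rw [hC3, hC7, hC7]
  calc ast (bar a b) (bar c d)
      = ast (bar (bar (ast a c) (ast b d)) (bar c d)) (bar c d) := by rw [h]
    _ = bar (ast a c) (ast b d) := hC6 _ _
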